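/- For ω, ω' ∈ {0,1}^m and multi-triangle densities g_{L,ω,h}, g_{L,ω',h} with disjoint bump supports, the squared L² distance satisfies ∫₀¹ (g_{L,ω,h} - g_{L,ω',h})² ≥ (2/3) d_H(ω,ω') L² h³ (1 - 3 m h), where d_H is the Hamming distance. -/

import Mathlib

open MeasureTheory Set

noncomputable def triK (L h t : ℝ) : ℝ := max (L * (h - |t|)) 0

lemma triK_cont (L h : ℝ) : Continuous (triK L h) :=
  (continuous_const.mul (continuous_const.sub continuous_abs)).max continuous_const

lemma triK_nonneg (L h t : ℝ) : 0 ≤ triK L h t := le_max_right _ _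

lemma triK_eq_zero (L h t : ℝ) (hL : 0 < L) (ht : h ≤ |t|) : triK L h t = 0 :=
  max_eq_right (mul_nonpos_of_nonneg_of_nonpos hL.le (by linarith))

lemma triK_eq (L h t : ℝ) (hL : 0 < L) (ht : |t| ≤ h) : triK L h t = L * (h - |t|) :=
  max_eq_left (mul_nonneg hL.le (by linarith))

lemma integral_triK (L h : ℝ) (hL : 0 < L) (hh : 0 < h) :
    ∫ t, triK L h t = L * h ^ 2 := by
  have hsupp : ∀ t, t ∉ Icc (-h) h → triK L h t = 0 := by
    intro t ht
    refine triK_eq_zero L h t hL ?_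
    simp only [mem_Icc, not_and_or, not_le] at ht
    rcases ht with ht | ht
    · rw [abs_of_neg (by linarith)]; linarith
    · rw [abs_of_pos (by linarith)]; linarith
  rw [← setIntegral_eq_integral_of_forall_compl_eq_zero hsupp]
  rw [integral_Icc_eq_integral_Ioc, ← intervalIntegral.integral_of_le (by linarith)]
  have hcongr : ∀ t ∈ Set.uIcc (-h) h, triK L h t = L * (h - |t|) := by
    intro t ht
    rw [Set.uIcc_of_le (by linarith)] at ht
    exact triK_eq L h t hL (abs_le.2 ⟨ht.1, ht.2⟩)
  rw [intervalIntegral.integral_congr hcongr]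
  have hsplit : ∫ t in (-h)..h, L * (h - |t|) =
      (∫ t in (-h)..(0:ℝ), L * (h - |t|)) + ∫ t in (0:ℝ)..h, L * (h - |t|) :=
    (intervalIntegral.integral_add_adjacent_intervals
      ((continuous_const.mul (continuous_const.sub continuous_abs)).intervalIntegrable _ _)
      ((continuous_const.mul (continuous_const.sub continuous_abs)).intervalIntegrable _ _)).symm
  rw [hsplit]
  have h1 : ∫ t in (-h)..(0:ℝ), L * (h - |t|) = ∫ t in (-h)..(0:ℝ), L * (h + t) := by
    refine intervalIntegral.integral_congr fun t ht => ?_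
    rw [Set.uIcc_of_le (by linarith)] at ht
    rw [abs_of_nonpos ht.2]; ring
  have h2 : ∫ t in (0:ℝ)..h, L * (h - |t|) = ∫ t in (0:ℝ)..h, L * (h - t) := by
    refine intervalIntegral.integral_congr fun t ht => ?_
    rw [Set.uIcc_of_le (by linarith)] at ht
    rw [abs_of_nonneg ht.1]
  rw [h1, h2]
  have e1 : ∫ t in (-h)..(0:ℝ), L * (h + t) = L * h ^ 2 / 2 := by
    rw [intervalIntegral.integral_const_mul,
      intervalIntegral.integral_add (continuous_const.intervalIntegrable _ _)
        intervalIntegral.intervalIntegrable_id,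
      intervalIntegral.integral_const, integral_id]
    simp; ring
  have e2 : ∫ t in (0:ℝ)..h, L * (h - t) = L * h ^ 2 / 2 := by
    rw [intervalIntegral.integral_const_mul,
      intervalIntegral.integral_sub (continuous_const.intervalIntegrable _ _)
        intervalIntegral.intervalIntegrable_id,
      intervalIntegral.integral_const, integral_id]
    simp; ring
  rw [e1, e2]; ring

lemma integral_triK_sq (L h : ℝ) (hL : 0 < L) (hh : 0 < h) :
    ∫ t, (triK L h t) ^ 2 = 2 / 3 * L ^ 2 * h ^ 3 := by
  have hsupp : ∀ t, t ∉ Icc (-h) h → (triK L h t) ^ 2 = 0 := by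
    intro t ht
    have : triK L h t = 0 := by
      refine triK_eq_zero L h t hL ?_
      simp only [mem_Icc, not_and_or, not_le] at ht
      rcases ht with ht | ht
      · rw [abs_of_neg (by linarith)]; linarith
      · rw [abs_of_pos (by linarith)]; linarith
    rw [this]; ring
  rw [← setIntegral_eq_integral_of_forall_compl_eq_zero hsupp]
  rw [integral_Icc_eq_integral_Ioc, ← intervalIntegral.integral_of_le (by linarith)]
  have hcongr : ∀ t ∈ Set.uIcc (-h) h, (triK L h t) ^ 2 = (L * (h - |t|)) ^ 2 := by
    intro t ht
    rw [Set.uIcc_of_le (by linarith)] at ht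
    rw [triK_eq L h t hL (abs_le.2 ⟨ht.1, ht.2⟩)]
  rw [intervalIntegral.integral_congr hcongr]
  have hc : Continuous fun t : ℝ => (L * (h - |t|)) ^ 2 :=
    (continuous_const.mul (continuous_const.sub continuous_abs)).pow 2
  have hsplit : ∫ t in (-h)..h, (L * (h - |t|)) ^ 2 =
      (∫ t in (-h)..(0:ℝ), (L * (h - |t|)) ^ 2) + ∫ t in (0:ℝ)..h, (L * (h - |t|)) ^ 2 :=
    (intervalIntegral.integral_add_adjacent_intervals
      (hc.intervalIntegrable _ _) (hc.intervalIntegrable _ _)).symm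
  rw [hsplit]
  have h1 : ∫ t in (-h)..(0:ℝ), (L * (h - |t|)) ^ 2
      = ∫ t in (-h)..(0:ℝ), (L^2*h^2 + (2*L^2*h)*t + L^2*t^2) := by
    refine intervalIntegral.integral_congr fun t ht => ?_
    rw [Set.uIcc_of_le (by linarith)] at ht
    rw [abs_of_nonpos ht.2]; ring
  have h2 : ∫ t in (0:ℝ)..h, (L * (h - |t|)) ^ 2
      = ∫ t in (0:ℝ)..h, (L^2*h^2 + (-(2*L^2*h))*t + L^2*t^2) := by
    refine intervalIntegral.integral_congr fun t ht => ?_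
    rw [Set.uIcc_of_le (by linarith)] at ht
    rw [abs_of_nonneg ht.1]; ring
  have poly : ∀ a b C1 C2 C3 : ℝ, ∫ t in a..b, (C1 + C2*t + C3*t^2)
      = C1*(b-a) + C2*(b^2-a^2)/2 + C3*(b^3-a^3)/3 := by
    intro a b C1 C2 C3
    have i1 : IntervalIntegrable (fun _ : ℝ => C1) volume a b :=
      continuous_const.intervalIntegrable _ _
    have i2 : IntervalIntegrable (fun t : ℝ => C2*t) volume a b :=
      (continuous_const.mul continuous_id).intervalIntegrable _ _
    have i3 : IntervalIntegrable (fun t : ℝ => C3*t^2) volume a b :=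
      (continuous_const.mul (continuous_pow 2)).intervalIntegrable _ _
    rw [intervalIntegral.integral_add (i1.add i2) i3, intervalIntegral.integral_add i1 i2,
      intervalIntegral.integral_const, intervalIntegral.integral_const_mul,
      intervalIntegral.integral_const_mul, integral_id,
      integral_pow]
    push_cast; simp; ring
  rw [h1, h2, poly, poly]; ring

lemma setIntegral_triK (L h c : ℝ) (hL : 0 < L) (hh : 0 < h) (hc1 : h ≤ c) (hc2 : c ≤ 1 - h) :
    ∫ t in Icc (0:ℝ) 1, triK L h (t - c) = L * h ^ 2 := by
  have hsupp : ∀ t, t ∉ Icc (0:ℝ) 1 → triK L h (t - c) = 0 := by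
    intro t ht
    refine triK_eq_zero L h _ hL ?_
    simp only [mem_Icc, not_and_or, not_le] at ht
    rcases ht with ht | ht
    · rw [abs_of_neg (by linarith)]; linarith
    · rw [abs_of_pos (by linarith)]; linarith
  rw [setIntegral_eq_integral_of_forall_compl_eq_zero hsupp,
    integral_sub_right_eq_self (triK L h) c, integral_triK L h hL hh]

lemma setIntegral_triK_sq (L h c : ℝ) (hL : 0 < L) (hh : 0 < h) (hc1 : h ≤ c) (hc2 : c ≤ 1 - h) :
    ∫ t in Icc (0:ℝ) 1, (triK L h (t - c)) ^ 2 = 2 / 3 * L ^ 2 * h ^ 3 := by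
  have hsupp : ∀ t, t ∉ Icc (0:ℝ) 1 → (triK L h (t - c)) ^ 2 = 0 := by
    intro t ht
    have : triK L h (t - c) = 0 := by
      refine triK_eq_zero L h _ hL ?_
      simp only [mem_Icc, not_and_or, not_le] at ht
      rcases ht with ht | ht
      · rw [abs_of_neg (by linarith)]; linarith
      · rw [abs_of_pos (by linarith)]; linarith
    rw [this]; ring
  rw [setIntegral_eq_integral_of_forall_compl_eq_zero hsupp]
  rw [show (fun t => (triK L h (t - c))^2) = fun t => (fun s => (triK L h s)^2) (t - c) from rfl]
  rw [integral_sub_right_eq_self (fun s => (triK L h s)^2) c, integral_triK_sq L h hL hh]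

def wOne {m : ℕ} (ω : Fin m → Bool) : ℕ := (Finset.univ.filter fun i => ω i = true).card

def hamDist {m : ℕ} (ω ω' : Fin m → Bool) : ℕ :=
  (Finset.univ.filter fun i => ω i ≠ ω' i).card

noncomputable def gMulti (L h : ℝ) (m : ℕ) (ω : Fin m → Bool) (t : ℝ) : ℝ :=
  1 - (wOne ω : ℝ) * L * h ^ 2 +
    ∑ i : Fin m, (if ω i then (1 : ℝ) else 0) * triK L h (t - ((i : ℕ) + 1) / ((m : ℕ) + 1))

noncomputable def bumpF (L h : ℝ) (m : ℕ) (i : Fin m) (t : ℝ) : ℝ :=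
  triK L h (t - ((i : ℕ) + 1) / ((m : ℕ) + 1))

noncomputable def dd {m : ℕ} (ω ω' : Fin m → Bool) (i : Fin m) : ℝ :=
  (if ω i then 1 else 0) - (if ω' i then 1 else 0)

lemma bumpF_cont (L h : ℝ) (m : ℕ) (i : Fin m) : Continuous (bumpF L h m i) :=
  (triK_cont L h).comp (continuous_id.sub continuous_const)

lemma sum_indicator_eq {m : ℕ} (ω : Fin m → Bool) :
    ∑ i : Fin m, (if ω i then (1:ℝ) else 0) = (wOne ω : ℝ) := by
  simp [wOne, Finset.sum_boole]

lemma sum_dd {m : ℕ} (ω ω' : Fin m → Bool) :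
    ∑ i, dd ω ω' i = (wOne ω : ℝ) - (wOne ω' : ℝ) := by
  unfold dd
  rw [Finset.sum_sub_distrib, sum_indicator_eq, sum_indicator_eq]

lemma sum_dd_sq {m : ℕ} (ω ω' : Fin m → Bool) :
    ∑ i, (dd ω ω' i) ^ 2 = (hamDist ω ω' : ℝ) := by
  unfold hamDist
  rw [show ((Finset.univ.filter fun i => ω i ≠ ω' i).card : ℝ)
      = ∑ i : Fin m, (if ω i ≠ ω' i then (1:ℝ) else 0) by
    rw [Finset.card_filter]; push_cast [apply_ite (Nat.cast : ℕ → ℝ)]; rfl]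
  refine Finset.sum_congr rfl fun i _ => ?_
  unfold dd
  cases hw : ω i <;> cases hw' : ω' i <;> simp [hw, hw'] <;> norm_num

lemma abs_sum_dd_le {m : ℕ} (ω ω' : Fin m → Bool) :
    |∑ i, dd ω ω' i| ≤ (hamDist ω ω' : ℝ) := by
  refine (Finset.abs_sum_le_sum_abs _ _).trans ?_
  rw [← sum_dd_sq ω ω']
  refine Finset.sum_le_sum fun i _ => ?_
  unfold dd
  cases hw : ω i <;> cases hw' : ω' i <;> simp <;> norm_num

lemma hamDist_le {m : ℕ} (ω ω' : Fin m → Bool) : (hamDist ω ω' : ℝ) ≤ (m : ℝ) := by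
  have := Finset.card_filter_le (Finset.univ : Finset (Fin m)) fun i => ω i ≠ ω' i
  simp only [Finset.card_univ, Fintype.card_fin] at this
  exact_mod_cast this

/-- Squared `L²` separation of multi-triangle densities:
`∫₀¹ (g_ω - g_ω')² ≥ (2/3) d_H(ω,ω') L² h³ (1 - 3 m h)`. -/
theorem l2_gMulti_ge (m : ℕ) (hm : 1 ≤ m) (ω ω' : Fin m → Bool)
    (L h : ℝ) (hL : 0 < L) (hh : 0 < h) (hh2 : h ≤ 1 / (2 * ((m : ℝ) + 1))) :
    (∫ t in Set.Icc (0 : ℝ) 1, (gMulti L h m ω t - gMulti L h m ω' t) ^ 2)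
      ≥ (2 / 3) * (hamDist ω ω' : ℝ) * L ^ 2 * h ^ 3 * (1 - 3 * (m : ℝ) * h) := by
  have hM1 : (0:ℝ) < (m:ℝ) + 1 := by positivity
  have hm1 : (1:ℝ) ≤ (m:ℝ) := by exact_mod_cast hm
  have hh2' : h * (2 * ((m:ℝ) + 1)) ≤ 1 := (le_div_iff₀ (by positivity)).1 hh2
  -- center bounds
  have hci_lb : ∀ i : Fin m, h ≤ (((i:ℕ):ℝ) + 1) / ((m:ℝ) + 1) := by
    intro i
    rw [le_div_iff₀ hM1]
    have : (0:ℝ) ≤ ((i:ℕ):ℝ) := Nat.cast_nonneg _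
    nlinarith
  have hci_ub : ∀ i : Fin m, (((i:ℕ):ℝ) + 1) / ((m:ℝ) + 1) ≤ 1 - h := by
    intro i
    rw [div_le_iff₀ hM1]
    have hi : ((i:ℕ):ℝ) + 1 ≤ (m:ℝ) := by exact_mod_cast Nat.succ_le_of_lt i.isLt
    nlinarith
  -- disjoint supports
  have hcross : ∀ i j : Fin m, i ≠ j → ∀ t : ℝ,
      bumpF L h m i t * bumpF L h m j t = 0 := by
    intro i j hij t
    by_contra hne
    have hi0 := left_ne_zero_of_mul hne
    have hj0 := right_ne_zero_of_mul hne
    have h1 : |t - (((i:ℕ):ℝ) + 1) / ((m:ℝ) + 1)| < h := by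
      by_contra hc
      exact hi0 (by
        unfold bumpF
        push_cast
        exact triK_eq_zero L h _ hL (not_lt.1 hc))
    have h2 : |t - (((j:ℕ):ℝ) + 1) / ((m:ℝ) + 1)| < h := by
      by_contra hc
      exact hj0 (by
        unfold bumpF
        push_cast
        exact triK_eq_zero L h _ hL (not_lt.1 hc))
    have hne' : (i:ℕ) ≠ (j:ℕ) := fun hc => hij (Fin.ext hc)
    have habs1 : (1:ℝ) ≤ |((i:ℕ):ℝ) - ((j:ℕ):ℝ)| := by
      rcases lt_or_gt_of_ne hne' with hlt | hgt
      · have : ((i:ℕ):ℝ) + 1 ≤ ((j:ℕ):ℝ) := by exact_mod_cast hlt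
        exact le_abs.2 (Or.inr (by linarith))
      · have : ((j:ℕ):ℝ) + 1 ≤ ((i:ℕ):ℝ) := by exact_mod_cast hgt
        exact le_abs.2 (Or.inl (by linarith))
    have hdist : (((i:ℕ):ℝ) + 1) / ((m:ℝ) + 1) - (((j:ℕ):ℝ) + 1) / ((m:ℝ) + 1)
        = (((i:ℕ):ℝ) - ((j:ℕ):ℝ)) / ((m:ℝ) + 1) := by
      field_simp
      ring
    have hsep : 1 / ((m:ℝ) + 1)
        ≤ |(((i:ℕ):ℝ) + 1) / ((m:ℝ) + 1) - (((j:ℕ):ℝ) + 1) / ((m:ℝ) + 1)| := by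
      rw [hdist, abs_div, abs_of_pos hM1]
      gcongr
    have htri : |(((i:ℕ):ℝ) + 1) / ((m:ℝ) + 1) - (((j:ℕ):ℝ) + 1) / ((m:ℝ) + 1)| < 2 * h := by
      have : (((i:ℕ):ℝ) + 1) / ((m:ℝ) + 1) - (((j:ℕ):ℝ) + 1) / ((m:ℝ) + 1)
          = (t - (((j:ℕ):ℝ) + 1) / ((m:ℝ) + 1)) - (t - (((i:ℕ):ℝ) + 1) / ((m:ℝ) + 1)) := by
        ring
      rw [this]
      calc |_ - _| ≤ |t - (((j:ℕ):ℝ) + 1) / ((m:ℝ) + 1)|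
            + |t - (((i:ℕ):ℝ) + 1) / ((m:ℝ) + 1)| := abs_sub _ _
        _ < 2 * h := by linarith
    have h2h : 2 * h ≤ 1 / ((m:ℝ) + 1) := by
      rw [le_div_iff₀ hM1]; linarith
    linarith
  -- pointwise decomposition
  have hdiff : ∀ t : ℝ, gMulti L h m ω t - gMulti L h m ω' t
      = ((wOne ω' : ℝ) - (wOne ω : ℝ)) * (L * h ^ 2) + ∑ i, dd ω ω' i * bumpF L h m i t := by
    intro t
    have hS : ∑ i, dd ω ω' i * bumpF L h m i t
        = (∑ i : Fin m, (if ω i then (1:ℝ) else 0) * bumpF L h m i t)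
          - ∑ i : Fin m, (if ω' i then (1:ℝ) else 0) * bumpF L h m i t := by
      rw [← Finset.sum_sub_distrib]
      exact Finset.sum_congr rfl fun i _ => by unfold dd; ring
    rw [hS]
    unfold gMulti bumpF
    ring
  -- pointwise square expansion
  have hsq : ∀ t : ℝ, (gMulti L h m ω t - gMulti L h m ω' t) ^ 2
      = (((wOne ω' : ℝ) - (wOne ω : ℝ)) * (L * h ^ 2)) ^ 2
        + 2 * (((wOne ω' : ℝ) - (wOne ω : ℝ)) * (L * h ^ 2)) * (∑ i, dd ω ω' i * bumpF L h m i t)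
        + ∑ i, (dd ω ω' i) ^ 2 * (bumpF L h m i t) ^ 2 := by
    intro t
    rw [hdiff t]
    have hkey : (∑ i, dd ω ω' i * bumpF L h m i t) * (∑ i, dd ω ω' i * bumpF L h m i t)
        = ∑ i, (dd ω ω' i) ^ 2 * (bumpF L h m i t) ^ 2 := by
      rw [Finset.sum_mul_sum]
      refine Finset.sum_congr rfl fun i _ => ?_
      rw [Finset.sum_eq_single i]
      · ring
      · intro j _ hj
        calc dd ω ω' i * bumpF L h m i t * (dd ω ω' j * bumpF L h m j t)
            = dd ω ω' i * dd ω ω' j * (bumpF L h m i t * bumpF L h m j t) := by ring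
          _ = 0 := by rw [hcross i j (Ne.symm hj) t]; ring
      · intro hmem; exact absurd (Finset.mem_univ i) hmem
    nlinarith [hkey]
  -- integrability
  have hFc : ∀ i : Fin m, Continuous (bumpF L h m i) := bumpF_cont L h m
  have hSc : Continuous fun t => ∑ i, dd ω ω' i * bumpF L h m i t :=
    continuous_finset_sum _ fun i _ => continuous_const.mul (hFc i)
  have hQc : Continuous fun t => ∑ i, (dd ω ω' i) ^ 2 * (bumpF L h m i t) ^ 2 :=
    continuous_finset_sum _ fun i _ => continuous_const.mul ((hFc i).pow 2)
  -- individual integrals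
  have hIF : ∀ i : Fin m, ∫ t in Icc (0:ℝ) 1, bumpF L h m i t = L * h ^ 2 := by
    intro i
    have : ∀ t : ℝ, bumpF L h m i t = triK L h (t - (((i:ℕ):ℝ) + 1) / ((m:ℝ) + 1)) := by
      intro t; unfold bumpF; push_cast; ring_nf
    simp only [this]
    exact setIntegral_triK L h _ hL hh (hci_lb i) (hci_ub i)
  have hIF2 : ∀ i : Fin m, ∫ t in Icc (0:ℝ) 1, (bumpF L h m i t) ^ 2 = 2 / 3 * L ^ 2 * h ^ 3 := by
    intro i
    have : ∀ t : ℝ, (bumpF L h m i t) ^ 2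
        = (triK L h (t - (((i:ℕ):ℝ) + 1) / ((m:ℝ) + 1))) ^ 2 := by
      intro t; unfold bumpF; push_cast; ring_nf
    simp only [this]
    exact setIntegral_triK_sq L h _ hL hh (hci_lb i) (hci_ub i)
  -- compute the full integral
  set c : ℝ := ((wOne ω' : ℝ) - (wOne ω : ℝ)) * (L * h ^ 2) with hc
  have int1 : IntegrableOn (fun _ : ℝ => c ^ 2) (Icc (0:ℝ) 1) volume :=
    continuous_const.integrableOn_Icc
  have int2 : IntegrableOn (fun t => 2 * c * (∑ i, dd ω ω' i * bumpF L h m i t))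
      (Icc (0:ℝ) 1) volume := (continuous_const.mul hSc).integrableOn_Icc
  have int3 : IntegrableOn (fun t => ∑ i, (dd ω ω' i) ^ 2 * (bumpF L h m i t) ^ 2)
      (Icc (0:ℝ) 1) volume := hQc.integrableOn_Icc
  have emain : (∫ t in Set.Icc (0 : ℝ) 1, (gMulti L h m ω t - gMulti L h m ω' t) ^ 2)
      = c ^ 2 + 2 * c * ((∑ i, dd ω ω' i) * (L * h ^ 2))
        + (∑ i, (dd ω ω' i) ^ 2) * (2 / 3 * L ^ 2 * h ^ 3) := by
    have int12 : IntegrableOn (fun t => c ^ 2 + 2 * c * (∑ i, dd ω ω' i * bumpF L h m i t))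
        (Icc (0:ℝ) 1) volume := (continuous_const.add (continuous_const.mul hSc)).integrableOn_Icc
    rw [setIntegral_congr_fun measurableSet_Icc (fun t _ => hsq t)]
    rw [integral_add int12 int3, integral_add int1 int2]
    congr 1
    · congr 1
      · rw [setIntegral_const]
        simp [Real.volume_Icc]
      · rw [integral_const_mul]
        rw [integral_finset_sum _ (f := fun i t => dd ω ω' i * bumpF L h m i t) (fun i _ => (continuous_const.mul (hFc i)).integrableOn_Icc)]
        rw [Finset.sum_mul]
        congr 1
        refine Finset.sum_congr rfl fun i _ => ?_
        rw [integral_const_mul, hIF i]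
    · rw [integral_finset_sum _ (f := fun i t => (dd ω ω' i) ^ 2 * (bumpF L h m i t) ^ 2) (μ := volume.restrict (Icc (0:ℝ) 1)) (fun i _ => Continuous.integrableOn_Icc (f := fun t => (dd ω ω' i) ^ 2 * (bumpF L h m i t) ^ 2) (a := (0:ℝ)) (b := 1) (continuous_const.mul ((hFc i).pow 2)))]
      rw [Finset.sum_mul]
      refine Finset.sum_congr rfl fun i _ => ?_
      rw [integral_const_mul, hIF2 i]
  rw [emain, sum_dd, sum_dd_sq]
  -- final arithmetic
  set D : ℝ := (hamDist ω ω' : ℝ) with hD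
  set w : ℝ := (wOne ω : ℝ)
  set w' : ℝ := (wOne ω' : ℝ)
  have hD0 : 0 ≤ D := Nat.cast_nonneg _
  have hDm : D ≤ (m:ℝ) := hamDist_le ω ω'
  have habsb : |w - w'| ≤ D := by
    rw [← sum_dd ω ω']; exact abs_sum_dd_le ω ω'
  have hb2 : (w - w') ^ 2 ≤ D ^ 2 := by nlinarith [abs_nonneg (w - w'), sq_abs (w - w')]
  have hkey : (w - w') ^ 2 * (L ^ 2 * h ^ 4) ≤ 2 * D * (m:ℝ) * (L ^ 2 * h ^ 4) := by
    refine mul_le_mul_of_nonneg_right ?_ (by positivity)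
    nlinarith
  rw [hc]
  nlinarith [hkey]
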